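/- Let E be a real inner product space and let 0 ≤ α ≤ β be reals. Let g : E → ℝ be differentiable with gradient map Δ : E → E (g has gradient Δ(x) at every x), and suppose g(0) = 0, Δ(0) = 0, the function x ↦ g(x) − (α/2)‖x‖² is convex, and the function x ↦ (β/2)‖x‖² − g(x) is convex. Fix ρ ∈ (0,1], an integer j ≥ 1, and a sequence y : ℕ → E. Define ũ_k = Δ(y_k) − α·y_k for k ≥ 0, and define ỹ : ℤ → E by ỹ_k = β·y_k − Δ(y_k) for k ≥ 0 and ỹ_k = 0 for k < 0. Then for every T ∈ ℕ, ∑_{k=0}^{T} ρ^{-2k} ⟨ũ_k, ỹ_k − ρ^{2j} ỹ_{k−j}⟩ ≥ 0. -/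

import Mathlib

open RealInnerProductSpace

section ZFAux
variable {E : Type*} [NormedAddCommGroup E] [InnerProductSpace ℝ E]

lemma convexOn_fderiv_le {f : E → ℝ} (hf : ConvexOn ℝ Set.univ f)
    {a : E} {f' : E →L[ℝ] ℝ} (hd : HasFDerivAt f f' a) (b : E) :
    f' (b - a) ≤ f b - f a := by
  set F : ℝ → ℝ := fun t => f (a + t • (b - a)) with hF
  have hline : HasDerivAt (fun t : ℝ => a + t • (b - a)) (b - a) 0 := by
    simpa using ((hasDerivAt_id (0:ℝ)).smul_const (b - a)).const_add a
  have hderiv : HasDerivAt F (f' (b - a)) 0 := by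
    have hd' : HasFDerivAt f f' (a + (0:ℝ) • (b - a)) := by simpa using hd
    have := hd'.comp_hasDerivAt 0 hline
    simpa [hF, Function.comp_def] using this
  have hslope : Filter.Tendsto (slope F 0) (nhdsWithin 0 (Set.Ioi 0)) (nhds (f' (b - a))) :=
    (hasDerivAt_iff_tendsto_slope.1 hderiv).mono_left
      (nhdsWithin_mono 0 (fun t ht => ne_of_gt ht))
  have hev : ∀ᶠ t in nhdsWithin (0:ℝ) (Set.Ioi 0), slope F 0 t ≤ f b - f a := by
    filter_upwards [Ioc_mem_nhdsGT_of_mem (by norm_num : (0:ℝ) ∈ Set.Ico (0:ℝ) 1)]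
      with t ht
    obtain ⟨ht0, ht1⟩ := ht
    have hcvx := hf.2 (Set.mem_univ a) (Set.mem_univ b) (by linarith : (0:ℝ) ≤ 1 - t)
      ht0.le (by ring)
    have heq : (1 - t) • a + t • b = a + t • (b - a) := by
      simp [smul_sub, sub_smul]; abel
    rw [heq] at hcvx
    have hF0 : F 0 = f a := by simp [hF]
    rw [slope_def_field, hF0, sub_zero, div_le_iff₀ ht0]
    simp only [hF, smul_eq_mul] at hcvx ⊢
    nlinarith [hcvx]
  exact le_of_tendsto hslope hev

lemma grad_ineq_lower (α : ℝ) (Δ : E → E) (g : E → ℝ)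
    (hgrad : ∀ x : E, HasFDerivAt g (innerSL ℝ (Δ x)) x)
    (hconv : ConvexOn ℝ Set.univ (fun x : E => g x - α / 2 * ‖x‖ ^ 2))
    (a b : E) :
    ⟪Δ a - α • a, b - a⟫ ≤ (g b - α / 2 * ‖b‖ ^ 2) - (g a - α / 2 * ‖a‖ ^ 2) := by
  have hn : HasFDerivAt (fun x : E => ‖x‖ ^ 2) (2 • (innerSL ℝ a)) a :=
    (hasStrictFDerivAt_norm_sq a).hasFDerivAt
  have hdf := (hgrad a).sub (hn.const_mul (α / 2))
  have hle := convexOn_fderiv_le hconv hdf b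
  have happ : ((innerSL ℝ (Δ a)) - (α / 2) • (2 • (innerSL ℝ a))) (b - a)
      = ⟪Δ a, b - a⟫ - α / 2 * (2 * ⟪a, b - a⟫) := by
    simp [ContinuousLinearMap.sub_apply, ContinuousLinearMap.smul_apply, smul_eq_mul]
  rw [happ] at hle
  have i3 : ⟪Δ a - α • a, b - a⟫ = ⟪Δ a, b - a⟫ - α * ⟪a, b - a⟫ := by
    rw [inner_sub_left, real_inner_smul_left]
  linarith

lemma grad_ineq_upper (α β : ℝ) (Δ : E → E) (g : E → ℝ)
    (hgrad : ∀ x : E, HasFDerivAt g (innerSL ℝ (Δ x)) x)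
    (hconv : ConvexOn ℝ Set.univ (fun x : E => β / 2 * ‖x‖ ^ 2 - g x))
    (a b : E) :
    g b - α / 2 * ‖b‖ ^ 2 ≤ (g a - α / 2 * ‖a‖ ^ 2) + ⟪Δ a - α • a, b - a⟫
      + (β - α) / 2 * ‖b - a‖ ^ 2 := by
  have hn : HasFDerivAt (fun x : E => ‖x‖ ^ 2) (2 • (innerSL ℝ a)) a :=
    (hasStrictFDerivAt_norm_sq a).hasFDerivAt
  have hdf := (hn.const_mul (β / 2)).sub (hgrad a)
  have hle := convexOn_fderiv_le hconv hdf b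
  have happ : ((β / 2) • (2 • (innerSL ℝ a)) - innerSL ℝ (Δ a)) (b - a)
      = β / 2 * (2 * ⟪a, b - a⟫) - ⟪Δ a, b - a⟫ := by
    simp [ContinuousLinearMap.sub_apply, ContinuousLinearMap.smul_apply, smul_eq_mul]
  rw [happ] at hle
  have i1 : ⟪a, b - a⟫ = ⟪a, b⟫ - ‖a‖ ^ 2 := by
    rw [inner_sub_right, real_inner_self_eq_norm_sq]
  have i2 : ‖b - a‖ ^ 2 = ‖b‖ ^ 2 - 2 * ⟪a, b⟫ + ‖a‖ ^ 2 := by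
    rw [norm_sub_sq_real, real_inner_comm]
  have i3 : ⟪Δ a - α • a, b - a⟫ = ⟪Δ a, b - a⟫ - α * ⟪a, b - a⟫ := by
    rw [inner_sub_left, real_inner_smul_left]
  rw [i1] at hle
  rw [i3, i2, i1]
  nlinarith [hle]

end ZFAux

lemma zf_sum_step (c r d x Gk Gm : ℝ) (hc : 0 < c) (hr : 0 < r) (hr1 : r ≤ 1)
    (hGk : 0 ≤ Gk) (hGm : 0 ≤ Gm) (hd : Gk ≤ d) (hx : x ≤ d - Gk + Gm) :
    c * Gk - c * r * Gm ≤ c * (d - r * x) := by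
  nlinarith [mul_le_mul_of_nonneg_left hx (mul_nonneg hc.le hr.le),
    mul_nonneg (mul_nonneg hc.le (by linarith : (0:ℝ) ≤ 1 - r)) (by linarith : (0:ℝ) ≤ d - Gk)]

theorem off_by_j_zames_falb_rho_iqc_slope_restricted
    {E : Type*} [NormedAddCommGroup E] [InnerProductSpace ℝ E]
    (α β : ℝ) (hα : 0 ≤ α) (hαβ : α ≤ β)
    (Δ : E → E) (g : E → ℝ)
    (hgrad : ∀ x : E, HasFDerivAt g (innerSL ℝ (Δ x)) x)
    (hg_zero : g 0 = 0) (hΔ_zero : Δ 0 = 0)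
    (hconv_lower : ConvexOn ℝ Set.univ (fun x : E => g x - α / 2 * ‖x‖ ^ 2))
    (hconv_upper : ConvexOn ℝ Set.univ (fun x : E => β / 2 * ‖x‖ ^ 2 - g x))
    (ρ : ℝ) (hρ : ρ ∈ Set.Ioc (0 : ℝ) 1)
    (j : ℕ) (hj : 1 ≤ j)
    (y : ℕ → E) (ytil : ℤ → E)
    (hytil_nat : ∀ k : ℕ, ytil (k : ℤ) = β • y k - Δ (y k))
    (hytil_neg : ∀ k : ℤ, k < 0 → ytil k = 0)
    (T : ℕ) :
    0 ≤ ∑ k ∈ Finset.range (T + 1),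
        ρ ^ (-(2 * (k : ℤ))) *
          ⟪Δ (y k) - α • y k, ytil (k : ℤ) - ρ ^ (2 * j) • ytil ((k : ℤ) - (j : ℤ))⟫ := by
  obtain ⟨hρ0, hρ1⟩ := hρ
  obtain ⟨h, hhdef⟩ : ∃ h : E → ℝ, h = fun x => g x - α / 2 * ‖x‖ ^ 2 := ⟨_, rfl⟩
  obtain ⟨φ, hφdef⟩ : ∃ φ : E → E, φ = fun x => Δ x - α • x := ⟨_, rfl⟩
  have key1 : ∀ a b : E, ⟪φ a, b - a⟫ ≤ h b - h a := by
    intro a b; rw [hφdef, hhdef]; exact grad_ineq_lower α Δ g hgrad hconv_lower a b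
  have hφy : ∀ k : ℕ, Δ (y k) - α • y k = φ (y k) := by intro k; rw [hφdef]
  have hφ0 : φ 0 = 0 := by rw [hφdef]; simp [hΔ_zero]
  have hh0 : h 0 = 0 := by rw [hhdef]; simp [hg_zero]
  have hpos : ∀ b : E, 0 ≤ h b := by
    intro b
    have := key1 0 b
    rw [hφ0, hh0] at this
    simpa using this
  rcases eq_or_lt_of_le hαβ with hEq | hL
  · -- degenerate case α = β : φ ≡ 0
    have key2' : ∀ a b : E, h b ≤ h a + ⟪φ a, b - a⟫ + (β - α) / 2 * ‖b - a‖ ^ 2 := by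
      intro a b; rw [hφdef, hhdef]; exact grad_ineq_upper α β Δ g hgrad hconv_upper a b
    have hup : ∀ b : E, h b ≤ 0 := by
      intro b
      have := key2' 0 b
      rw [hφ0, hh0, ← hEq] at this
      simpa using this
    have hzero : ∀ a : E, φ a = 0 := by
      intro a
      have h1 := key1 a (a + φ a)
      rw [add_sub_cancel_left] at h1
      have : ⟪φ a, φ a⟫ ≤ 0 := by
        have := hpos (a + φ a); have := hup (a + φ a)
        have := hpos a; have := hup a
        linarith
      exact real_inner_self_nonpos.1 this
    refine le_of_eq (Finset.sum_eq_zero fun k _ => ?_).symm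
    rw [hφy k, hzero (y k)]
    simp
  · -- main case α < β
    obtain ⟨L, hLdef⟩ : ∃ L : ℝ, L = β - α := ⟨_, rfl⟩
    have key2 : ∀ a b : E, h b ≤ h a + ⟪φ a, b - a⟫ + L / 2 * ‖b - a‖ ^ 2 := by
      intro a b; rw [hφdef, hhdef, hLdef]; exact grad_ineq_upper α β Δ g hgrad hconv_upper a b
    have hLpos : 0 < L := by rw [hLdef]; linarith
    obtain ⟨G, hGdef⟩ : ∃ G : E → ℝ, G = fun a => L * h a - ‖φ a‖ ^ 2 / 2 := ⟨_, rfl⟩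
    have hGval : ∀ a : E, G a = L * h a - ‖φ a‖ ^ 2 / 2 := by intro a; rw [hGdef]
    -- (P1)
    have hGnn : ∀ a : E, 0 ≤ G a := by
      intro a
      have h1 := key2 a (a - L⁻¹ • φ a)
      rw [sub_sub_cancel_left] at h1
      rw [inner_neg_right, real_inner_smul_right, real_inner_self_eq_norm_sq] at h1
      rw [norm_neg, norm_smul, Real.norm_eq_abs, abs_of_pos (inv_pos.2 hLpos), mul_pow] at h1
      have he : h a + -(L⁻¹ * ‖φ a‖ ^ 2) + L / 2 * ((L⁻¹) ^ 2 * ‖φ a‖ ^ 2)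
          = h a - ‖φ a‖ ^ 2 / (2 * L) := by
        field_simp; ring
      rw [he] at h1
      have h2 := hpos (a - L⁻¹ • φ a)
      have h3 : ‖φ a‖ ^ 2 / (2 * L) ≤ h a := by linarith
      rw [div_le_iff₀ (by positivity)] at h3
      rw [hGval]; linarith
    -- (P2)
    have hdG : ∀ a : E, G a ≤ ⟪φ a, L • a - φ a⟫ := by
      intro a
      have h1 := key1 a (L⁻¹ • φ a)
      have h2 := key2 0 (L⁻¹ • φ a)
      rw [hφ0, hh0, inner_zero_left, sub_zero] at h2
      rw [norm_smul, Real.norm_eq_abs, abs_of_pos (inv_pos.2 hLpos), mul_pow] at h2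
      have he2 : (0:ℝ) + 0 + L / 2 * ((L⁻¹) ^ 2 * ‖φ a‖ ^ 2) = ‖φ a‖ ^ 2 / (2 * L) := by
        field_simp; ring
      rw [he2] at h2
      rw [inner_sub_right, real_inner_smul_right, real_inner_self_eq_norm_sq] at h1
      have h3 : L⁻¹ * ‖φ a‖ ^ 2 - ‖φ a‖ ^ 2 / (2 * L) ≤ ⟪φ a, a⟫ - h a := by linarith
      have he3 : L⁻¹ * ‖φ a‖ ^ 2 - ‖φ a‖ ^ 2 / (2 * L) = ‖φ a‖ ^ 2 / (2 * L) := by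
        field_simp; ring
      rw [he3, div_le_iff₀ (by positivity)] at h3
      rw [hGval, inner_sub_right, real_inner_smul_right, real_inner_self_eq_norm_sq]
      linarith
    -- (P3)
    have hcross : ∀ a b : E, ⟪φ a, L • b - φ b⟫ ≤ ⟪φ a, L • a - φ a⟫ - G a + G b := by
      intro a b
      have hcoco : ‖φ b - φ a‖ ^ 2 / 2 ≤ L * (h b - h a - ⟪φ a, b - a⟫) := by
        obtain ⟨w, hwdef⟩ : ∃ w : E, w = b - L⁻¹ • (φ b - φ a) := ⟨_, rfl⟩
        have s1 := key1 a w
        have s2 := key2 b w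
        rw [show w - b = -(L⁻¹ • (φ b - φ a)) by rw [hwdef]; abel] at s2
        rw [inner_neg_right, real_inner_smul_right] at s2
        rw [norm_neg, norm_smul, Real.norm_eq_abs, abs_of_pos (inv_pos.2 hLpos), mul_pow] at s2
        rw [show w - a = (b - a) - L⁻¹ • (φ b - φ a) by rw [hwdef]; abel] at s1
        rw [inner_sub_right (𝕜 := ℝ) (φ a) (b - a), real_inner_smul_right] at s1
        have hma : ⟪φ b, φ b - φ a⟫ - ⟪φ a, φ b - φ a⟫ = ‖φ b - φ a‖ ^ 2 := by
          rw [← inner_sub_left, real_inner_self_eq_norm_sq]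
        have he4 : L⁻¹ * ⟪φ b, φ b - φ a⟫ - L⁻¹ * ⟪φ a, φ b - φ a⟫
            - L / 2 * ((L⁻¹) ^ 2 * ‖φ b - φ a‖ ^ 2) = ‖φ b - φ a‖ ^ 2 / (2 * L) := by
          rw [← mul_sub, hma]; field_simp; ring
        have h5 : ‖φ b - φ a‖ ^ 2 / (2 * L) ≤ h b - h a - ⟪φ a, b - a⟫ := by linarith
        rw [div_le_iff₀ (by positivity)] at h5
        linarith
      have hexpa : ⟪φ a, L • a - φ a⟫ = L * ⟪φ a, a⟫ - ‖φ a‖ ^ 2 := by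
        rw [inner_sub_right, real_inner_smul_right, real_inner_self_eq_norm_sq]
      have hexpb : ⟪φ a, L • b - φ b⟫ = L * ⟪φ a, b⟫ - ⟪φ a, φ b⟫ := by
        rw [inner_sub_right, real_inner_smul_right]
      have hib : ⟪φ a, b - a⟫ = ⟪φ a, b⟫ - ⟪φ a, a⟫ := inner_sub_right _ _ _
      have hnrm : ‖φ b - φ a‖ ^ 2 = ‖φ b‖ ^ 2 - 2 * ⟪φ a, φ b⟫ + ‖φ a‖ ^ 2 := by
        rw [norm_sub_sq_real, real_inner_comm]
      rw [hexpa, hexpb, hGval, hGval]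
      rw [hib] at hcoco
      nlinarith [hcoco]

    obtain ⟨t, htdef⟩ : ∃ t : ℕ → ℝ, t = fun k : ℕ => ρ ^ (-(2 * (k:ℤ))) * G (y k) := ⟨_, rfl⟩
    obtain ⟨s, hsdef⟩ : ∃ s : ℕ → ℝ, s = fun k => if j ≤ k then t (k - j) else 0 := ⟨_, rfl⟩
    have htval : ∀ k : ℕ, t k = ρ ^ (-(2 * (k:ℤ))) * G (y k) := fun k => by rw [htdef]
    have htnn : ∀ k : ℕ, 0 ≤ t k := by
      intro k; rw [htval]; exact mul_nonneg (zpow_nonneg hρ0.le _) (hGnn _)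
    have hytilL : ∀ k : ℕ, ytil (k : ℤ) = L • y k - φ (y k) := by
      intro k; rw [hytil_nat, hφdef, hLdef, sub_smul]; dsimp only; abel
    have hterm : ∀ k : ℕ, t k - s k ≤ ρ ^ (-(2 * (k : ℤ))) *
        ⟪Δ (y k) - α • y k, ytil (k : ℤ) - ρ ^ (2 * j) • ytil ((k : ℤ) - (j : ℤ))⟫ := by
      intro k
      have hck : (0:ℝ) < ρ ^ (-(2 * (k:ℤ))) := zpow_pos hρ0 _
      by_cases hjk : j ≤ k
      · have hm : ((k:ℤ) - (j:ℤ)) = ((k - j : ℕ) : ℤ) := by omega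
        rw [hφy, hytilL, hm, hytilL (k - j)]
        rw [inner_sub_right, real_inner_smul_right]
        have hxk := hcross (y k) (y (k - j))
        have hdk := hdG (y k)
        have hrj : (0:ℝ) < ρ ^ (2 * j) := pow_pos hρ0 _
        have hrj1 : ρ ^ (2 * j) ≤ 1 := pow_le_one₀ hρ0.le hρ1
        have hsk : s k = ρ ^ (-(2 * ((k - j : ℕ):ℤ))) * G (y (k - j)) := by
          rw [hsdef]; dsimp only; rw [if_pos hjk, htval]
        have hcrel : ρ ^ (-(2 * ((k - j : ℕ):ℤ))) = ρ ^ (-(2 * (k:ℤ))) * ρ ^ (2 * j) := by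
          rw [← zpow_natCast ρ (2 * j), ← zpow_add₀ (ne_of_gt hρ0)]
          congr 1; push_cast; omega
        rw [htval, hsk, hcrel]
        exact zf_sum_step _ _ _ _ _ _ hck hrj hrj1 (hGnn _) (hGnn _) hdk hxk
      · have hz : ytil ((k:ℤ) - (j:ℤ)) = 0 := hytil_neg _ (by omega)
        rw [hφy, hz, smul_zero, sub_zero, hytilL]
        have hsk : s k = 0 := by rw [hsdef]; dsimp only; rw [if_neg hjk]
        rw [hsk, sub_zero, htval]
        exact mul_le_mul_of_nonneg_left (hdG (y k)) hck.le
    have hsum_s : ∀ n : ℕ, ∑ k ∈ Finset.range n, s k = ∑ k ∈ Finset.range (n - j), t k := by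
      intro n
      induction n with
      | zero => simp
      | succ n ih =>
        rw [Finset.sum_range_succ, ih]
        by_cases hn : j ≤ n
        · rw [show n + 1 - j = (n - j) + 1 by omega, Finset.sum_range_succ]
          rw [hsdef]; dsimp only; rw [if_pos hn]
        · rw [show n + 1 - j = n - j by omega]
          rw [hsdef]; dsimp only; rw [if_neg hn, add_zero]
    have hsub : ∑ k ∈ Finset.range (T + 1 - j), t k ≤ ∑ k ∈ Finset.range (T + 1), t k :=
      Finset.sum_le_sum_of_subset_of_nonneg
        (Finset.range_subset_range.2 (by omega)) (fun i _ _ => htnn i)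
    calc (0:ℝ) ≤ ∑ k ∈ Finset.range (T + 1), t k - ∑ k ∈ Finset.range (T + 1), s k := by
          rw [hsum_s]; linarith
      _ = ∑ k ∈ Finset.range (T + 1), (t k - s k) := (Finset.sum_sub_distrib _ _).symm
      _ ≤ _ := Finset.sum_le_sum fun k _ => hterm k
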